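/- Let λ > 0 and define for vectors φ, ψ ∈ ℝ^N the sums Ĵ_{k,1} = Σ_{i=1}^{k} Σ_{j=i}^{k} (−2i + 2k) φ_i ψ_j λ^{−2i+2k} and J_{k,1} = Σ_{i=1}^{k} Σ_{j=i}^{k} φ_i ψ_j λ^{−2i+2k}, R_{k,1} = λ^{2k} Σ_{i=1}^{k} (−2i) φ_i λ^{−2i}, P_{k,1} = λ^{2k} Σ_{i=1}^{k} φ_i λ^{−2i}. Then for 2 ≤ k ≤ N: Ĵ_{k,1} = λ²(Ĵ_{k−1,1} + 2 J_{k−1,1}) + ψ_k (R_{k,1} + 2k P_{k,1}), with Ĵ_{1,1} = 0. -/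
import Mathlib


/-- Recurrence for the weighted double sums `Ĵ_{k,1}` in FTVP-2. -/
theorem Jhat1_recurrence (N : ℕ) (lam : ℝ) (hlam : 0 < lam) (φ ψ : ℕ → ℝ)
    (Jhat J R P : ℕ → ℝ)
    (hJhat : ∀ k, Jhat k = ∑ i ∈ Finset.Icc 1 k, ∑ j ∈ Finset.Icc i k,
        (-2 * (i : ℝ) + 2 * (k : ℝ)) * φ i * ψ j * lam ^ (-2 * (i : ℤ) + 2 * (k : ℤ)))
    (hJ : ∀ k, J k = ∑ i ∈ Finset.Icc 1 k, ∑ j ∈ Finset.Icc i k,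
        φ i * ψ j * lam ^ (-2 * (i : ℤ) + 2 * (k : ℤ)))
    (hR : ∀ k, R k = lam ^ (2 * (k : ℤ)) * ∑ i ∈ Finset.Icc 1 k,
        (-2 * (i : ℝ)) * φ i * lam ^ (-2 * (i : ℤ)))
    (hP : ∀ k, P k = lam ^ (2 * (k : ℤ)) * ∑ i ∈ Finset.Icc 1 k,
        φ i * lam ^ (-2 * (i : ℤ))) :
    (∀ k, 2 ≤ k → k ≤ N →
        Jhat k = lam ^ 2 * (Jhat (k - 1) + 2 * J (k - 1)) +
          ψ k * (R k + 2 * (k : ℝ) * P k)) ∧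
    Jhat 1 = 0 := by
  have hlam' : lam ≠ 0 := ne_of_gt hlam
  constructor
  · intro k hk _
    obtain ⟨m, rfl⟩ : ∃ m, k = m + 1 := ⟨k - 1, by omega⟩
    have hm : 1 ≤ m := by omega
    have hzz : ∀ i : ℕ, lam ^ (-2 * (i:ℤ) + 2 * ((m:ℤ) + 1))
        = lam ^ 2 * lam ^ (-2 * (i:ℤ) + 2 * (m:ℤ)) := by
      intro i
      have h1 : (-2 * (i:ℤ) + 2 * ((m:ℤ) + 1)) = 2 + (-2 * (i:ℤ) + 2 * (m:ℤ)) := by ring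
      rw [h1, zpow_add₀ hlam']
      norm_num [zpow_ofNat]
    simp only [hJhat, hJ, hR, hP, Nat.add_sub_cancel]
    push_cast
    rw [Finset.sum_Icc_succ_top (show 1 ≤ m + 1 by omega),
        Finset.sum_Icc_succ_top (show 1 ≤ m + 1 by omega),
        Finset.sum_Icc_succ_top (show 1 ≤ m + 1 by omega)]
    have inner : ∀ i ∈ Finset.Icc 1 m,
        (∑ x ∈ Finset.Icc i (m + 1),
          (-2 * (i:ℝ) + 2 * ((m:ℝ) + 1)) * φ i * ψ x * lam ^ (-2 * (i:ℤ) + 2 * ((m:ℤ) + 1)))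
        = (∑ x ∈ Finset.Icc i m,
            (lam ^ 2 * ((-2 * (i:ℝ) + 2 * (m:ℝ)) * φ i * ψ x * lam ^ (-2 * (i:ℤ) + 2 * (m:ℤ)))
              + lam ^ 2 * (2 * (φ i * ψ x * lam ^ (-2 * (i:ℤ) + 2 * (m:ℤ))))))
          + (ψ (m + 1) * (lam ^ (2 * ((m:ℤ) + 1)) * (-2 * (i:ℝ) * φ i * lam ^ (-2 * (i:ℤ))))
            + ψ (m + 1) * (2 * ((m:ℝ) + 1) * (lam ^ (2 * ((m:ℤ) + 1)) * (φ i * lam ^ (-2 * (i:ℤ)))))) := by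
      intro i hi
      have hi' : i ≤ m + 1 := by simp only [Finset.mem_Icc] at hi; omega
      rw [Finset.sum_Icc_succ_top hi']
      congr 1
      · exact Finset.sum_congr rfl fun x _ => by rw [hzz i]; ring
      · rw [show (-2 * (i:ℤ) + 2 * ((m:ℤ) + 1)) = 2 * ((m:ℤ) + 1) + (-2 * (i:ℤ)) from by ring,
            zpow_add₀ hlam']
        ring
    rw [Finset.sum_congr rfl inner]
    simp only [Finset.Icc_self, Finset.sum_singleton, Finset.sum_add_distrib, ← Finset.mul_sum]
    push_cast
    ring
  · rw [hJhat]
    norm_num
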